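/- Let n be a positive integer, let f : ℝ^n → ℝ^n be a topical function with upper cycle time c ∈ ℝ (i.e. ⊤(f^k(0))/k → c as k → ∞), and let x ∈ ℝ^n. Then there exists an index i ∈ {1,…,n} such that for all k ∈ ℕ, x_i + k·c ≤ (f^k(x))_i. -/

import Mathlib

open Filter

/-- `⊤(x) = max_i x_i`. -/
noncomputable def topV {n : ℕ} (x : Fin n → ℝ) : ℝ := ⨆ i, x i

lemma le_topV {n : ℕ} (x : Fin n → ℝ) (i : Fin n) : x i ≤ topV x :=
  le_ciSup (Set.Finite.bddAbove (Set.finite_range x)) i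

lemma topV_le {n : ℕ} (hn : 0 < n) (x : Fin n → ℝ) {M : ℝ} (h : ∀ i, x i ≤ M) :
    topV x ≤ M := by
  have : Nonempty (Fin n) := ⟨⟨0, hn⟩⟩
  exact ciSup_le h

lemma exists_topV_eq {n : ℕ} (hn : 0 < n) (x : Fin n → ℝ) : ∃ i, topV x = x i := by
  have : Nonempty (Fin n) := ⟨⟨0, hn⟩⟩
  obtain ⟨i, hi⟩ := Finite.exists_max x
  exact ⟨i, le_antisymm (ciSup_le hi) (le_topV x i)⟩

lemma step_bound {n : ℕ} (f : (Fin n → ℝ) → (Fin n → ℝ))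
    (htop : ∀ (x : Fin n → ℝ) (h : ℝ), f (fun i => x i + h) = fun i => f x i + h)
    (hmono : Monotone f)
    (a b : Fin n → ℝ) (i : Fin n) :
    f a i ≤ f b i + topV (fun j => a j - b j) := by
  have h1 : a ≤ fun j => b j + topV (fun j => a j - b j) := by
    intro j
    have := le_topV (fun j => a j - b j) j
    simp only at this ⊢
    linarith
  have h2 := hmono h1
  rw [htop] at h2
  exact h2 i

lemma iter_bound {n : ℕ} (hn : 0 < n) (f : (Fin n → ℝ) → (Fin n → ℝ))
    (htop : ∀ (x : Fin n → ℝ) (h : ℝ), f (fun i => x i + h) = fun i => f x i + h)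
    (hmono : Monotone f) :
    ∀ (m : ℕ) (a b : Fin n → ℝ) (i : Fin n),
      f^[m] a i ≤ f^[m] b i + topV (fun j => a j - b j) := by
  intro m
  induction m with
  | zero =>
    intro a b i
    simp only [Function.iterate_zero, id_eq]
    have := le_topV (fun j => a j - b j) i
    linarith
  | succ m ih =>
    intro a b i
    rw [Function.iterate_succ_apply, Function.iterate_succ_apply]
    have h1 := ih (f a) (f b) i
    have h2 : topV (fun j => f a j - f b j) ≤ topV (fun j => a j - b j) := by
      apply topV_le hn
      intro j
      have := step_bound f htop hmono a b j
      linarith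
    linarith

/-- If `w k / k → 0` then for every window size `N ≥ 1` and `ε > 0` there is a point
`k ≥ N` which is an `ε`-near-maximum of `w` on the window `[k-N, k]`. -/
lemma good_k (w : ℕ → ℝ) (hw : Tendsto (fun k : ℕ => w k / k) atTop (nhds 0))
    (N : ℕ) (hN : 0 < N) (ε : ℝ) (hε : 0 < ε) :
    ∃ k, N ≤ k ∧ ∀ j, k - N ≤ j → j ≤ k → w j ≤ w k + ε := by
  by_contra hcon
  push_neg at hcon
  -- hcon : ∀ k, N ≤ k → ∃ j, k - N ≤ j ∧ j ≤ k ∧ w k + ε < w j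
  have claim : ∀ k, N ≤ k → ∃ j t : ℕ, j < N ∧ k ≤ N + t * N ∧ w k + t * ε ≤ w j := by
    intro k
    induction k using Nat.strong_induction_on with
    | _ k ih =>
      intro hk
      obtain ⟨j₁, hj₁, hj₁k, hwj₁⟩ := hcon k hk
      have hj₁lt : j₁ < k := by
        rcases lt_or_eq_of_le hj₁k with h | h
        · exact h
        · exfalso; rw [h] at hwj₁; linarith
      have hkj : k ≤ j₁ + N := by omega
      by_cases hc1 : j₁ < N
      · refine ⟨j₁, 1, hc1, by omega, ?_⟩
        push_cast
        linarith
      · obtain ⟨j, t, hjN, hle, hwle⟩ := ih j₁ hj₁lt (le_of_not_gt hc1)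
        refine ⟨j, t + 1, hjN, ?_, ?_⟩
        · have h' : (t + 1) * N = t * N + N := by ring
          omega
        · push_cast at hwle ⊢
          linarith
  obtain ⟨M, hM⟩ : ∃ M, ∀ j, j < N → w j ≤ M :=
    ⟨(Finset.range N).sup' ⟨0, Finset.mem_range.mpr hN⟩ w,
      fun j hj => Finset.le_sup' w (Finset.mem_range.mpr hj)⟩
  have hNR : (0:ℝ) < (N:ℝ) := by exact_mod_cast hN
  have hδ : (0:ℝ) < ε / (2 * N) := by positivity
  have hev : ∀ᶠ k : ℕ in atTop, -(ε / (2 * N)) < w k / k :=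
    hw.eventually (eventually_gt_nhds (by linarith))
  obtain ⟨K, hK⟩ := eventually_atTop.mp hev
  obtain ⟨k₀, hk₀⟩ := exists_nat_gt ((2 * N * M + 3 * N * ε) / ε)
  set k := max k₀ (max K N) with hkdef
  have hkN : N ≤ k := le_trans (le_max_right K N) (le_max_right _ _)
  have hkK : K ≤ k := le_trans (le_max_left K N) (le_max_right _ _)
  have hkk₀ : k₀ ≤ k := le_max_left _ _
  have hkpos : (0:ℝ) < (k:ℝ) := by
    have : 0 < k := lt_of_lt_of_le hN hkN
    exact_mod_cast this
  obtain ⟨j, t, hjN, hkle, hwle⟩ := claim k hkN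
  have h1 : -(ε / (2 * N)) < w k / k := hK k hkK
  have h1' : -(ε / (2 * N)) * k < w k := (lt_div_iff₀ hkpos).mp h1
  have hW : -(ε * (k:ℝ)) < w k * (2 * N) := by
    have heq : -(ε * (k:ℝ)) = (-(ε / (2 * N)) * k) * (2 * N) := by
      field_simp
    rw [heq]
    exact mul_lt_mul_of_pos_right h1' (by positivity)
  have h3 : (k:ℝ) ≤ (N:ℝ) + t * N := by exact_mod_cast hkle
  have h4 : w k + t * ε ≤ M := le_trans hwle (hM j hjN)
  have hkbig : (2 * N * M + 3 * N * ε) / ε < (k:ℝ) :=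
    lt_of_lt_of_le hk₀ (by exact_mod_cast hkk₀)
  have hkbig' : 2 * (N:ℝ) * M + 3 * N * ε < k * ε := by
    have := mul_lt_mul_of_pos_right hkbig hε
    rwa [div_mul_cancel₀ _ (ne_of_gt hε)] at this
  -- derive contradiction
  have h5 : (k:ℝ) * ε ≤ ((N:ℝ) + t * N) * ε := mul_le_mul_of_nonneg_right h3 hε.le
  have h6 : (N:ℝ) * (t * ε) ≤ N * (M - w k) :=
    mul_le_mul_of_nonneg_left (by linarith) hNR.le
  nlinarith [hW, h5, h6, hkbig', hNR, hε]

theorem coordinate_realising_cycle_time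
    (n : ℕ) (hn : 0 < n) (f : (Fin n → ℝ) → (Fin n → ℝ))
    (htop : ∀ (x : Fin n → ℝ) (h : ℝ), f (fun i => x i + h) = fun i => f x i + h)
    (hmono : Monotone f)
    (c : ℝ)
    (hc : Tendsto (fun k : ℕ => topV (f^[k] 0) / k) atTop (nhds c))
    (x : Fin n → ℝ) :
    ∃ i : Fin n, ∀ k : ℕ, x i + k * c ≤ f^[k] x i := by
  have hne : Nonempty (Fin n) := ⟨⟨0, hn⟩⟩
  set u : ℕ → ℝ := fun k => topV (fun i => f^[k] x i - x i) with hu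
  set T : ℕ → ℝ := fun k => topV (f^[k] (0 : Fin n → ℝ)) with hT
  set A : ℝ := topV x with hA
  set B : ℝ := topV (fun j => -x j) with hB
  -- |u k - T k| ≤ A + B
  have hup : ∀ k, u k ≤ T k + (A + B) := by
    intro k
    apply topV_le hn
    intro i
    have h1 : f^[k] x i ≤ f^[k] (0 : Fin n → ℝ) i + topV (fun j => x j - (0 : Fin n → ℝ) j) :=
      iter_bound hn f htop hmono k x 0 i
    have h2 : topV (fun j => x j - (0 : Fin n → ℝ) j) = A := by
      rw [hA]; congr 1; funext j; simp
    rw [h2] at h1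
    have h3 : f^[k] (0 : Fin n → ℝ) i ≤ T k := le_topV _ i
    have h4 : -x i ≤ B := le_topV (fun j => -x j) i
    linarith
  have hdown : ∀ k, T k ≤ u k + (A + B) := by
    intro k
    apply topV_le hn
    intro i
    have h1 : f^[k] (0 : Fin n → ℝ) i ≤ f^[k] x i + topV (fun j => (0 : Fin n → ℝ) j - x j) :=
      iter_bound hn f htop hmono k 0 x i
    have h2 : topV (fun j => (0 : Fin n → ℝ) j - x j) = B := by
      rw [hB]; congr 1; funext j; simp
    rw [h2] at h1
    have h3 : f^[k] x i - x i ≤ u k := le_topV (fun i => f^[k] x i - x i) i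
    have h4 : x i ≤ A := le_topV x i
    linarith
  -- u k / k → c
  have hdiff : Tendsto (fun k : ℕ => (u k - T k) / k) atTop (nhds 0) := by
    apply squeeze_zero_norm (a := fun k : ℕ => (A + B) / k)
    · intro k
      rcases Nat.eq_zero_or_pos k with hk | hk
      · subst hk; norm_num
      · have hkpos : (0:ℝ) < (k:ℝ) := by exact_mod_cast hk
        rw [Real.norm_eq_abs, abs_div, abs_of_pos hkpos]
        have habs : |u k - T k| ≤ A + B := by
          rw [abs_le]
          constructor
          · have := hdown k; linarith
          · have := hup k; linarith
        gcongr
    · exact tendsto_const_div_atTop_nhds_zero_nat (A + B)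
  have huc : Tendsto (fun k : ℕ => u k / k) atTop (nhds c) := by
    have := hc.add hdiff
    rw [add_zero] at this
    refine this.congr (fun k => ?_)
    rw [← add_div]
    simp only [hT]
    ring_nf
  -- w k / k → 0
  set w : ℕ → ℝ := fun k => u k - k * c with hwdef
  have hwt : Tendsto (fun k : ℕ => w k / k) atTop (nhds 0) := by
    have hconst : Tendsto (fun k : ℕ => ((k : ℝ) * c) / k) atTop (nhds c) := by
      apply Tendsto.congr' _ tendsto_const_nhds
      filter_upwards [eventually_ge_atTop 1] with k hk
      have hk0 : (k:ℝ) ≠ 0 := by positivity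
      field_simp
    have := huc.sub hconst
    rw [sub_self] at this
    refine this.congr (fun k => ?_)
    rw [← sub_div]
  -- choose near-maximum points for each window
  have hgk : ∀ p : ℕ, ∃ k, p + 1 ≤ k ∧
      ∀ j, k - (p + 1) ≤ j → j ≤ k → w j ≤ w k + 1 / (p + 1) := by
    intro p
    exact good_k w hwt (p + 1) (Nat.succ_pos p) (1 / (p + 1)) (by positivity)
  choose kp hkp1 hkp2 using hgk
  -- choose argmax coordinates
  have hsel : ∀ p : ℕ, ∃ i, u (kp p) = f^[kp p] x i - x i := by
    intro p
    exact exists_topV_eq hn _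
  choose sel hselspec using hsel
  obtain ⟨i, hi⟩ := Finite.exists_infinite_fiber sel
  have hiS : (sel ⁻¹' {i}).Infinite := Set.infinite_coe_iff.mp hi
  refine ⟨i, fun m => ?_⟩
  refine le_of_forall_pos_le_add (fun δ hδ => ?_)
  obtain ⟨P, hP⟩ := exists_nat_one_div_lt hδ
  obtain ⟨p, hpS, hpgt⟩ := hiS.exists_gt (max m P)
  have hmp : m ≤ p := le_of_lt (lt_of_le_of_lt (le_max_left m P) hpgt)
  have hPp : P ≤ p := le_of_lt (lt_of_le_of_lt (le_max_right m P) hpgt)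
  set k := kp p with hkdef
  have hmk : m ≤ k := le_trans (by omega) (hkp1 p)
  -- key inequality: f^[k] x i ≤ f^[m] x i + u (k - m)
  have hkey : f^[k] x i ≤ f^[m] x i + u (k - m) := by
    have hsplit : f^[k] x = f^[m] (f^[k - m] x) := by
      rw [← Function.iterate_add_apply]
      congr 1
      omega
    rw [hsplit]
    exact iter_bound hn f htop hmono m (f^[k - m] x) x i
  have hseli : sel p = i := hpS
  have hmax : u k = f^[k] x i - x i := by
    rw [← hseli]; exact hselspec p
  have hwin : w (k - m) ≤ w k + 1 / (p + 1) :=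
    hkp2 p (k - m) (by omega) (Nat.sub_le _ _)
  have e1 : w k = u k - (k : ℝ) * c := rfl
  have e2 : w (k - m) = u (k - m) - ((k : ℝ) - (m : ℝ)) * c := by
    have : ((k - m : ℕ) : ℝ) = (k : ℝ) - (m : ℝ) := by
      push_cast [Nat.cast_sub hmk]; ring
    rw [hwdef]
    simp only
    rw [this]
  have h1p : (1:ℝ) / (p + 1) < δ := by
    refine lt_of_le_of_lt ?_ hP
    have hPpR : (P:ℝ) ≤ (p:ℝ) := Nat.cast_le.mpr hPp
    apply one_div_le_one_div_of_le (by positivity)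
    linarith
  have s1 : u (k - m) - ((k:ℝ) - (m:ℝ)) * c ≤ u k - (k:ℝ) * c + 1 / ((p:ℝ) + 1) := by
    rw [← e1, ← e2]; exact hwin
  have s2 : x i + (m:ℝ) * c - 1 / ((p:ℝ) + 1) ≤ f^[m] x i := by nlinarith [hkey, hmax, s1]
  linarith [s2, h1p]
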